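/- Let (x₁,y₁) and (x₂,y₂) be dyadic points in [0,1]² with x₁ < x₂ and y₁ < y₂, and suppose y₂ − y₁ ≥ x₂ − x₁ and (y₂−y₁)/(x₂−x₁) ≠ 2^k for every integer k. Then there exists a dyadic point (x₃,y₃) with x₁ < x₃ < x₂ and y₁ < y₃ < y₂ such that (y₃−y₁)/(x₃−x₁) = 2^{k₁} and (y₂−y₃)/(x₂−x₃) = 2^{k₂} for some non-negative integers k₁, k₂. -/

import Mathlib

open Set

/-- A real number is dyadic if it is an integer divided by a power of 2. -/
def IsDyadic (x : ℝ) : Prop := ∃ (z : ℤ) (n : ℕ), x = (z : ℝ) / 2 ^ n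

lemma IsDyadic.sub {a b : ℝ} (ha : IsDyadic a) (hb : IsDyadic b) : IsDyadic (a - b) := by
  obtain ⟨z, n, rfl⟩ := ha
  obtain ⟨w, m, rfl⟩ := hb
  refine ⟨z * 2 ^ m - w * 2 ^ n, n + m, ?_⟩
  push_cast
  rw [pow_add]
  field_simp

lemma IsDyadic.add {a b : ℝ} (ha : IsDyadic a) (hb : IsDyadic b) : IsDyadic (a + b) := by
  obtain ⟨z, n, rfl⟩ := ha
  obtain ⟨w, m, rfl⟩ := hb
  refine ⟨z * 2 ^ m + w * 2 ^ n, n + m, ?_⟩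
  push_cast
  rw [pow_add]
  field_simp

lemma IsDyadic.div_pow {a : ℝ} (ha : IsDyadic a) (k : ℕ) : IsDyadic (a / 2 ^ k) := by
  obtain ⟨z, n, rfl⟩ := ha
  refine ⟨z, n + k, ?_⟩
  rw [pow_add]
  field_simp

lemma IsDyadic.pow_mul {a : ℝ} (ha : IsDyadic a) (k : ℕ) : IsDyadic (2 ^ k * a) := by
  obtain ⟨z, n, rfl⟩ := ha
  refine ⟨2 ^ k * z, n, ?_⟩
  push_cast
  ring

theorem stmt_2 (x₁ y₁ x₂ y₂ : ℝ)
    (hx₁ : x₁ ∈ Icc (0:ℝ) 1) (hy₁ : y₁ ∈ Icc (0:ℝ) 1)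
    (hx₂ : x₂ ∈ Icc (0:ℝ) 1) (hy₂ : y₂ ∈ Icc (0:ℝ) 1)
    (hdx₁ : IsDyadic x₁) (hdy₁ : IsDyadic y₁)
    (hdx₂ : IsDyadic x₂) (hdy₂ : IsDyadic y₂)
    (hxlt : x₁ < x₂) (hylt : y₁ < y₂)
    (hge : x₂ - x₁ ≤ y₂ - y₁)
    (hnot : ∀ k : ℤ, (y₂ - y₁) / (x₂ - x₁) ≠ 2 ^ k) :
    ∃ x₃ y₃ : ℝ, IsDyadic x₃ ∧ IsDyadic y₃ ∧
      x₁ < x₃ ∧ x₃ < x₂ ∧ y₁ < y₃ ∧ y₃ < y₂ ∧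
      ∃ k₁ k₂ : ℕ, (y₃ - y₁) / (x₃ - x₁) = 2 ^ k₁ ∧ (y₂ - y₃) / (x₂ - x₃) = 2 ^ k₂ := by
  set dx := x₂ - x₁ with hdxdef
  set dy := y₂ - y₁ with hdydef
  have hdxpos : 0 < dx := by simp [hdxdef]; linarith
  have hdypos : 0 < dy := by simp [hdydef]; linarith
  set s : ℝ := dy / dx with hsdef
  have hs1 : 1 ≤ s := (le_div_iff₀ hdxpos).mpr (by linarith)
  have hspos : 0 < s := by linarith
  set m : ℤ := Int.log 2 s with hmdef
  have hm0 : 0 ≤ m := by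
    rw [hmdef, ← Int.zpow_le_iff_le_log (by norm_num) hspos]
    simpa using hs1
  set k : ℕ := m.toNat with hkdef
  have hzk : (m : ℤ) = (k : ℤ) := (Int.toNat_of_nonneg hm0).symm
  have hlow : (2:ℝ) ^ k < s := by
    have h1 : (2:ℝ) ^ m ≤ s := Int.zpow_log_le_self (by norm_num) hspos
    have h2 : (2:ℝ) ^ m ≠ s := fun h => hnot m h.symm
    have : (2:ℝ) ^ m < s := lt_of_le_of_ne h1 h2
    rwa [hzk, zpow_natCast] at this
  have hhigh : s < (2:ℝ) ^ (k + 1) := by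
    have := Int.lt_zpow_succ_log_self (b := 2) (by norm_num) s
    rw [← hmdef, hzk] at this
    have h2 : ((k : ℤ) + 1) = ((k + 1 : ℕ) : ℤ) := by push_cast; ring
    rwa [h2, zpow_natCast] at this
  -- u := dy / 2^k - dx
  set u : ℝ := dy / 2 ^ k - dx with hudef
  have h2kpos : (0:ℝ) < 2 ^ k := by positivity
  have hupos : 0 < u := by
    have : 2 ^ k * dx < dy := by
      have h := (lt_div_iff₀ hdxpos).mp hlow
      simpa [hsdef, div_mul_cancel₀] using h
    have : dx < dy / 2 ^ k := by rw [lt_div_iff₀ h2kpos]; nlinarith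
    simp [hudef]; linarith
  have hult : u < dx := by
    have hdy' : dy < 2 ^ (k + 1) * dx := by
      have : s * dx < 2 ^ (k+1) * dx := by nlinarith
      calc dy = s * dx := by rw [hsdef, div_mul_cancel₀ _ hdxpos.ne']
        _ < 2 ^ (k+1) * dx := this
    have : dy / 2 ^ k < 2 * dx := by
      rw [div_lt_iff₀ h2kpos]
      nlinarith [pow_succ (2:ℝ) k]
    simp only [hudef]; linarith
  have hdyd : IsDyadic dy := hdy₂.sub hdy₁
  have hdxd : IsDyadic dx := hdx₂.sub hdx₁
  have hud : IsDyadic u := (hdyd.div_pow k).sub hdxd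
  refine ⟨x₁ + u, y₁ + 2 ^ (k + 1) * u, hdx₁.add hud, hdy₁.add (hud.pow_mul (k+1)), ?_, ?_, ?_, ?_, k + 1, k, ?_, ?_⟩
  · linarith
  · have : x₂ = x₁ + dx := by simp [hdxdef]
    linarith
  · nlinarith [pow_pos (show (0:ℝ) < 2 by norm_num) (k+1)]
  · -- y₂ - y₃ = 2^k (dx - u) > 0
    have key : y₂ - (y₁ + 2 ^ (k+1) * u) = 2 ^ k * (dx - u) := by
      have h1 : y₂ - y₁ = dy := by simp [hdydef]
      have h2 : (2:ℝ) ^ (k+1) = 2 * 2 ^ k := by rw [pow_succ]; ring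
      have h3 : 2 ^ k * u = dy - 2 ^ k * dx := by
        simp only [hudef]; field_simp
      nlinarith [h3]
    nlinarith [mul_pos h2kpos (show 0 < dx - u by linarith)]
  · have : x₁ + u - x₁ = u := by ring
    rw [this]
    have : y₁ + 2 ^ (k+1) * u - y₁ = 2 ^ (k+1) * u := by ring
    rw [this, mul_div_assoc, div_self hupos.ne', mul_one]
  · have hxden : x₂ - (x₁ + u) = dx - u := by simp [hdxdef]; ring
    have hnum : y₂ - (y₁ + 2 ^ (k+1) * u) = 2 ^ k * (dx - u) := by
      have h2 : (2:ℝ) ^ (k+1) = 2 * 2 ^ k := by rw [pow_succ]; ring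
      have h3 : 2 ^ k * u = dy - 2 ^ k * dx := by
        simp only [hudef]; field_simp
      have h1 : y₂ - y₁ = dy := by simp [hdydef]
      nlinarith [h3]
    rw [hxden, hnum, mul_div_assoc, div_self (by linarith : dx - u ≠ 0), mul_one]
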